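/- Let 0 < r, s < n and let A be a partial Latin square of order n in which cell (i,j) is filled if and only if i ≤ r and j ≤ s. Then A can be completed to a Latin square of order n if and only if N(k) ≥ r + s − n for every symbol k = 1,...,n, where N(k) denotes the number of filled cells of A containing the symbol k. -/

import Mathlib

/-- A partial Latin square of order `n`, given as a partial filling of the `n × n`
array with symbols from `Fin n`: no symbol occurs twice in a row or twice in a column. -/
def IsPartialLatin (n : ℕ) (L : Fin n × Fin n → Option (Fin n)) : Prop :=
  ∀ c₁ c₂ : Fin n × Fin n, c₁ ≠ c₂ → (L c₁).isSome → L c₁ = L c₂ →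
    c₁.1 ≠ c₂.1 ∧ c₁.2 ≠ c₂.2

/-- A Latin square of order `n`: each symbol occurs exactly once in each row and
exactly once in each column. -/
def IsLatin (n : ℕ) (L : Fin n × Fin n → Fin n) : Prop :=
  (∀ i : Fin n, Function.Injective fun j => L (i, j)) ∧
  (∀ j : Fin n, Function.Injective fun i => L (i, j))

/-- `L'` completes the partial Latin square `L`: it agrees with `L` on all filled cells. -/
def Completes (n : ℕ) (L' : Fin n × Fin n → Fin n) (L : Fin n × Fin n → Option (Fin n)) :
    Prop :=
  ∀ c : Fin n × Fin n, ∀ k : Fin n, L c = some k → L' c = k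

open Finset

lemma card_seg (n t : ℕ) (h : t ≤ n) :
    #(univ.filter (fun j : Fin n => (j : ℕ) < t)) = t := by
  have : (univ.filter (fun j : Fin n => (j : ℕ) < t)) =
      (univ : Finset (Fin t)).map ⟨fun j => ⟨j.1, lt_of_lt_of_le j.2 h⟩,
        by intro a b hab; simpa [Fin.ext_iff] using hab⟩ := by
    ext x
    simp only [mem_filter, mem_univ, true_and, mem_map, Function.Embedding.coeFn_mk,
      Fin.ext_iff]
    constructor
    · intro hx; exact ⟨⟨x.1, hx⟩, rfl⟩
    · rintro ⟨j, hj⟩; rw [← hj]; exact j.2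
  rw [this, card_map, card_univ, Fintype.card_fin]

/-- One column-extension step for Ryser's theorem. -/
lemma step (n r t : ℕ) (hrn : r ≤ n) (htn : t < n)
    (M : Fin n × Fin n → Option (Fin n)) (hM : IsPartialLatin n M)
    (hfill : ∀ c : Fin n × Fin n, (M c).isSome ↔ (c.1 : ℕ) < r ∧ (c.2 : ℕ) < t)
    (hinv : ∀ k : Fin n, r + t ≤ #(univ.filter fun c => M c = some k) + n) :
    ∃ M' : Fin n × Fin n → Option (Fin n), IsPartialLatin n M' ∧
      (∀ c : Fin n × Fin n, (M' c).isSome ↔ (c.1 : ℕ) < r ∧ (c.2 : ℕ) < t + 1) ∧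
      (∀ c k, M c = some k → M' c = some k) ∧
      (∀ k : Fin n, r + (t + 1) ≤ #(univ.filter fun c => M' c = some k) + n) := by
  classical
  have hn0 : 0 < n := lt_of_le_of_lt (Nat.zero_le t) htn
  set N : Fin n → ℕ := fun k => #(univ.filter fun c => M c = some k) with hN
  set realRows : Finset (Fin n) := univ.filter (fun i : Fin n => (i : ℕ) < r) with hRR
  have hRRcard : #realRows = r := card_seg n r hrn
  set missRow : Fin n → Finset (Fin n) :=
    fun i => univ.filter (fun k => ∀ j, M (i, j) ≠ some k) with hmissRow
  set miss : Fin n → Finset (Fin n) :=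
    fun k => realRows.filter (fun i => k ∈ missRow i) with hmiss
  have hmissMem : ∀ k i, i ∈ miss k ↔ ((i : ℕ) < r ∧ k ∈ missRow i) := by
    intro k i
    rw [hmiss]
    simp only [mem_filter, hRR, mem_univ, true_and]
  -- each real row misses exactly n - t symbols
  have hmissRowCard : ∀ i : Fin n, (i : ℕ) < r → #(missRow i) = n - t := by
    intro i hi
    set d : Fin n := ⟨0, hn0⟩ with hd
    set Jt : Finset (Fin n) := univ.filter (fun j : Fin n => (j : ℕ) < t) with hJt
    have hsome : ∀ j ∈ Jt, (M (i, j)).isSome := by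
      intro j hj
      rw [hfill]
      exact ⟨hi, (mem_filter.mp hj).2⟩
    have himg : (univ.filter (fun k : Fin n => ∃ j, M (i, j) = some k)) =
        Jt.image (fun j => (M (i, j)).getD d) := by
      ext k
      simp only [mem_filter, mem_univ, true_and, mem_image]
      constructor
      · rintro ⟨j, hj⟩
        refine ⟨j, ?_, ?_⟩
        · have := (hfill (i, j)).mp (by rw [hj]; rfl)
          exact mem_filter.mpr ⟨mem_univ _, this.2⟩
        · rw [hj]; rfl
      · rintro ⟨j, hj, hk⟩
        obtain ⟨x, hx⟩ := Option.isSome_iff_exists.mp (hsome j hj)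
        refine ⟨j, ?_⟩
        rw [hx]; rw [hx] at hk; simp at hk; rw [hk]
    have hinj : Set.InjOn (fun j => (M (i, j)).getD d) (Jt : Set (Fin n)) := by
      intro j₁ h₁ j₂ h₂ he
      obtain ⟨x₁, hx₁⟩ := Option.isSome_iff_exists.mp (hsome j₁ h₁)
      obtain ⟨x₂, hx₂⟩ := Option.isSome_iff_exists.mp (hsome j₂ h₂)
      by_contra hne
      have hcne : (i, j₁) ≠ (i, j₂) := by
        simp [Prod.ext_iff]; intro h; exact hne (by exact h)
      have heq : M (i, j₁) = M (i, j₂) := by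
        rw [hx₁, hx₂]
        simp only [hx₁, hx₂, Option.getD_some] at he
        rw [he]
      exact (hM _ _ hcne (by rw [hx₁]; rfl) heq).1 rfl
    have hcard : #(univ.filter (fun k : Fin n => ∃ j, M (i, j) = some k)) = t := by
      rw [himg, card_image_of_injOn hinj, hJt, card_seg n t (le_of_lt htn)]
    have hcompl : missRow i =
        univ \ (univ.filter (fun k : Fin n => ∃ j, M (i, j) = some k)) := by
      rw [hmissRow]; ext k; simp
    rw [hcompl, card_sdiff_of_subset (filter_subset _ _), card_univ, Fintype.card_fin, hcard]
  -- for each symbol k : #(miss k) + N k = r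
  have hmissCard : ∀ k : Fin n, #(miss k) + N k = r := by
    intro k
    set cells : Finset (Fin n × Fin n) := univ.filter (fun c => M c = some k) with hcells
    set rowsOf : Finset (Fin n) := cells.image Prod.fst with hrowsOf
    have hinj : Set.InjOn Prod.fst (cells : Set (Fin n × Fin n)) := by
      intro c₁ h₁ c₂ h₂ he
      by_contra hne
      have h₁' := (mem_filter.mp h₁).2
      have h₂' := (mem_filter.mp h₂).2
      exact (hM c₁ c₂ hne (by rw [h₁']; rfl) (by rw [h₁', h₂'])).1 he
    have hcard : #rowsOf = #cells := card_image_of_injOn hinj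
    have hsub : rowsOf ⊆ realRows := by
      intro i hi
      obtain ⟨c, hc, rfl⟩ := mem_image.mp hi
      have := (hfill c).mp (by rw [(mem_filter.mp hc).2]; rfl)
      exact mem_filter.mpr ⟨mem_univ _, this.1⟩
    have hset : miss k = realRows \ rowsOf := by
      rw [hmiss]
      ext i
      simp only [mem_filter, mem_sdiff, hrowsOf, mem_image, hcells, mem_univ, true_and,
        hmissRow]
      constructor
      · rintro ⟨hir, hall⟩
        refine ⟨hir, ?_⟩
        rintro ⟨c, hc, rfl⟩
        exact hall c.2 (by simpa using hc)
      · rintro ⟨hir, hno⟩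
        refine ⟨hir, fun j hj => hno ⟨(i, j), hj, rfl⟩⟩
    rw [hset, card_sdiff_of_subset hsub, hcard, hRRcard]
    have h1 : #cells ≤ r := by rw [← hRRcard, ← hcard]; exact card_le_card hsub
    have h2 : N k = #cells := rfl
    omega
  set nonCrit : Finset (Fin n) := univ.filter (fun k => r + t + 1 ≤ N k + n) with hnc
  set tset : Fin n → Finset (Fin n) :=
    fun i : Fin n => if (i : ℕ) < r then missRow i else nonCrit with htset
  -- Hall's condition
  have hall : ∀ S : Finset (Fin n), #S ≤ #(S.biUnion tset) := by
    intro S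
    set U : Finset (Fin n) := S.biUnion tset with hU
    have htpos : 0 < n - t := by omega
    have hmissLe : ∀ k, #(miss k) ≤ n - t := by
      intro k
      have h1 := hmissCard k
      have h2 : r + t ≤ N k + n := hinv k
      omega
    by_cases hd : ∀ i ∈ S, (i : ℕ) < r
    · have key : #S * (n - t) ≤ #U * (n - t) := by
        apply Finset.card_mul_le_card_mul (fun i k => k ∈ tset i)
        · intro i hi
          have hsub : tset i ⊆ U.bipartiteAbove (fun i k => k ∈ tset i) i := by
            intro k hk
            exact (Finset.mem_bipartiteAbove _).mpr ⟨Finset.mem_biUnion.mpr ⟨i, hi, hk⟩, hk⟩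
          calc n - t = #(tset i) := by
                rw [htset]; simp only [hd i hi, if_true]
                exact (hmissRowCard i (hd i hi)).symm
            _ ≤ _ := card_le_card hsub
        · intro k _
          have hsub : S.bipartiteBelow (fun i k => k ∈ tset i) k ⊆ miss k := by
            intro i hi
            obtain ⟨hiS, hik⟩ := (Finset.mem_bipartiteBelow _).mp hi
            have hir := hd i hiS
            rw [htset] at hik
            simp only [hir, if_true] at hik
            exact (hmissMem k i).mpr ⟨hir, hik⟩
          exact le_trans (card_le_card hsub) (hmissLe k)
      exact Nat.le_of_mul_le_mul_right key htpos
    · push_neg at hd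
      obtain ⟨i₀, hi₀S, hi₀r⟩ := hd
      have hncU : nonCrit ⊆ U := by
        intro k hk
        apply Finset.mem_biUnion.mpr ⟨i₀, hi₀S, ?_⟩
        rw [htset]; simp only []; rw [if_neg (by omega)]; exact hk
      have key : #(univ \ U) * (n - t) ≤ #(realRows \ S) * (n - t) := by
        apply Finset.card_mul_le_card_mul (fun k i => k ∈ missRow i)
        · intro k hk
          have hkU : k ∉ U := (mem_sdiff.mp hk).2
          have hcrit : ¬ (r + t + 1 ≤ N k + n) := by
            intro h
            exact hkU (hncU (by rw [hnc]; exact mem_filter.mpr ⟨mem_univ _, h⟩))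
          have hmc : #(miss k) = n - t := by
            have h1 := hmissCard k
            have h2 : r + t ≤ N k + n := hinv k
            omega
          have hsub : miss k ⊆ (realRows \ S).bipartiteAbove (fun k i => k ∈ missRow i)
              k := by
            intro i hi
            obtain ⟨hir, hik⟩ := (hmissMem k i).mp hi
            have hiR : i ∈ realRows := mem_filter.mpr ⟨mem_univ _, hir⟩
            have hiS : i ∉ S := by
              intro hiS
              apply hkU
              apply Finset.mem_biUnion.mpr ⟨i, hiS, ?_⟩
              rw [htset]; simp only [hir, if_true]; exact hik
            exact (Finset.mem_bipartiteAbove _).mpr ⟨mem_sdiff.mpr ⟨hiR, hiS⟩, hik⟩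
          calc n - t = #(miss k) := hmc.symm
            _ ≤ _ := card_le_card hsub
        · intro i hi
          have hir : (i : ℕ) < r := (mem_filter.mp (mem_sdiff.mp hi).1).2
          have hsub : (univ \ U).bipartiteBelow (fun k i => k ∈ missRow i) i ⊆
              missRow i := by
            intro k hk
            exact ((Finset.mem_bipartiteBelow _).mp hk).2
          calc _ ≤ #(missRow i) := card_le_card hsub
            _ = n - t := hmissRowCard i hir
      have key2 : #(univ \ U) ≤ #(realRows \ S) := Nat.le_of_mul_le_mul_right key htpos
      have e1 : #(realRows \ S) + #(realRows ∩ S) = r := by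
        rw [Finset.card_sdiff_add_card_inter, hRRcard]
      have e2 : #(S \ realRows) + #(S ∩ realRows) = #S :=
        Finset.card_sdiff_add_card_inter S realRows
      have e3 : #(S \ realRows) ≤ n - r := by
        have hsub : S \ realRows ⊆ univ \ realRows := sdiff_subset_sdiff (subset_univ S) le_rfl
        calc #(S \ realRows) ≤ #(univ \ realRows) := card_le_card hsub
          _ = n - r := by rw [card_sdiff_of_subset (subset_univ _), card_univ, Fintype.card_fin, hRRcard]
      have e4 : #(univ \ U) + #U = n := by
        rw [card_sdiff_of_subset (subset_univ _), card_univ, Fintype.card_fin]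
        have : #U ≤ n := by
          calc #U ≤ #(univ : Finset (Fin n)) := card_le_card (subset_univ _)
            _ = n := by rw [card_univ, Fintype.card_fin]
        omega
      have e5 : #(realRows ∩ S) = #(S ∩ realRows) := by rw [inter_comm]
      omega
  obtain ⟨f, hfinj, hf⟩ := (Finset.all_card_le_biUnion_card_iff_existsInjective' tset).mp hall
  -- the new square
  set tF : Fin n := ⟨t, htn⟩ with htF
  set M' : Fin n × Fin n → Option (Fin n) :=
    fun c => if (c.1 : ℕ) < r ∧ (c.2 : ℕ) = t then some (f c.1) else M c with hM'
  -- f on real rows avoids the row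
  have hfmiss : ∀ i : Fin n, (i : ℕ) < r → ∀ j, M (i, j) ≠ some (f i) := by
    intro i hi
    have := hf i
    rw [htset] at this
    simp only [hi, if_true, hmissRow, mem_filter, mem_univ, true_and] at this
    exact this
  have hext : ∀ c k, M c = some k → M' c = some k := by
    intro c k hc
    have hreg := (hfill c).mp (by rw [hc]; rfl)
    have hcond : ¬ ((c.1 : ℕ) < r ∧ (c.2 : ℕ) = t) := by omega
    simp only [hM', if_neg hcond]
    exact hc
  have hreg' : ∀ c : Fin n × Fin n, (M' c).isSome ↔ (c.1 : ℕ) < r ∧ (c.2 : ℕ) < t + 1 := by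
    intro c
    by_cases h : (c.1 : ℕ) < r ∧ (c.2 : ℕ) = t
    · simp only [hM', if_pos h]; simp; omega
    · simp only [hM', if_neg h]; rw [hfill]; omega
  have hlatin' : IsPartialLatin n M' := by
    intro c₁ c₂ hne hsome heq
    by_cases h1 : (c₁.1 : ℕ) < r ∧ (c₁.2 : ℕ) = t <;>
      by_cases h2 : (c₂.1 : ℕ) < r ∧ (c₂.2 : ℕ) = t
    · -- both new
      rw [hM'] at heq
      simp only [if_pos h1, if_pos h2, Option.some.injEq] at heq
      have h11 : c₁.1 = c₂.1 := hfinj heq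
      have h22 : c₁.2 = c₂.2 := Fin.ext (by omega)
      exact absurd (Prod.ext h11 h22) hne
    · -- c₁ new, c₂ old
      rw [hM'] at heq
      simp only [if_pos h1, if_neg h2] at heq
      have hreg := (hfill c₂).mp (by rw [← heq]; rfl)
      constructor
      · intro h11
        have : M (c₂.1, c₂.2) = some (f c₂.1) := by
          rw [Prod.mk.eta, ← heq, h11]
        exact hfmiss c₂.1 (by omega) c₂.2 this
      · intro h22
        have : (c₂.2 : ℕ) = t := by rw [← h22]; exact h1.2
        omega
    · -- c₁ old, c₂ new
      rw [hM'] at heq hsome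
      simp only [if_neg h1, if_pos h2] at heq hsome
      have hreg := (hfill c₁).mp hsome
      constructor
      · intro h11
        have : M (c₁.1, c₁.2) = some (f c₁.1) := by
          rw [Prod.mk.eta, heq, h11]
        exact hfmiss c₁.1 (by omega) c₁.2 this
      · intro h22
        have : (c₁.2 : ℕ) = t := by rw [h22]; exact h2.2
        omega
    · -- both old
      rw [hM'] at heq hsome
      simp only [if_neg h1, if_neg h2] at heq hsome
      exact hM c₁ c₂ hne hsome heq
  refine ⟨M', hlatin', hreg', hext, ?_⟩
  -- the invariant
  intro k
  have hsub : (univ.filter fun c => M c = some k) ⊆ (univ.filter fun c => M' c = some k) := by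
    intro c hc
    exact mem_filter.mpr ⟨mem_univ _, hext c k (mem_filter.mp hc).2⟩
  by_cases hcrit : r + t + 1 ≤ N k + n
  · have h1 := card_le_card hsub
    have h2 : N k = #(univ.filter fun c => M c = some k) := rfl
    omega
  · -- critical: k must be placed in a real row
    have hfsurj : Function.Surjective f := Finite.surjective_of_injective hfinj
    obtain ⟨i, rfl⟩ := hfsurj k
    have hir : (i : ℕ) < r := by
      by_contra hir
      have := hf i
      rw [htset] at this
      simp only [if_neg hir, hnc, mem_filter, mem_univ, true_and] at this
      exact hcrit this
    have hnew : M' (i, tF) = some (f i) := by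
      have hcond : (((i, tF) : Fin n × Fin n).1 : ℕ) < r ∧ (((i, tF) : Fin n × Fin n).2 : ℕ) = t :=
        ⟨hir, rfl⟩
      simp only [hM', if_pos hcond]
    have hnotold : (i, tF) ∉ (univ.filter fun c => M c = some (f i)) := by
      simp only [mem_filter, mem_univ, true_and]
      intro hc
      have := (hfill (i, tF)).mp (by rw [hc]; rfl)
      simp [htF] at this
    have hins : insert (i, tF) (univ.filter fun c => M c = some (f i)) ⊆
        (univ.filter fun c => M' c = some (f i)) := by
      intro c hc
      rcases mem_insert.mp hc with h | h
      · subst h; exact mem_filter.mpr ⟨mem_univ _, hnew⟩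
      · exact hsub h
    have hcard := card_le_card hins
    rw [card_insert_of_notMem hnotold] at hcard
    have h2 := hinv (f i)
    have h3 : N (f i) = #(univ.filter fun c => M c = some (f i)) := rfl
    omega

/-- Iterated column extension. -/
lemma extendCols (n r : ℕ) (hrn : r ≤ n) :
    ∀ (d t : ℕ), t + d = n →
    ∀ M : Fin n × Fin n → Option (Fin n), IsPartialLatin n M →
      (∀ c : Fin n × Fin n, (M c).isSome ↔ (c.1 : ℕ) < r ∧ (c.2 : ℕ) < t) →
      (∀ k : Fin n, r + t ≤ #(univ.filter fun c => M c = some k) + n) →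
      ∃ M' : Fin n × Fin n → Option (Fin n), IsPartialLatin n M' ∧
        (∀ c : Fin n × Fin n, (M' c).isSome ↔ (c.1 : ℕ) < r ∧ (c.2 : ℕ) < n) ∧
        (∀ c k, M c = some k → M' c = some k) ∧
        (∀ k : Fin n, r + n ≤ #(univ.filter fun c => M' c = some k) + n) := by
  intro d
  induction d with
  | zero =>
    intro t ht M hM hfill hinv
    subst ht
    simp only [Nat.add_zero] at *
    exact ⟨M, hM, hfill, fun _ _ h => h, hinv⟩
  | succ d ih =>
    intro t ht M hM hfill hinv
    have htn : t < n := by omega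
    obtain ⟨M₁, h₁, h₂, h₃, h₄⟩ := step n r t hrn htn M hM hfill hinv
    have ht' : (t + 1) + d = n := by omega
    obtain ⟨M', g₁, g₂, g₃, g₄⟩ := ih (t + 1) ht' M₁ h₁ h₂ h₄
    exact ⟨M', g₁, g₂, fun c k h => g₃ c k (h₃ c k h), g₄⟩

/-- transpose preserves partial-latin-ness -/
lemma transpose_latin (n : ℕ) (M : Fin n × Fin n → Option (Fin n))
    (hM : IsPartialLatin n M) :
    IsPartialLatin n (fun c => M (c.2, c.1)) := by
  intro c₁ c₂ hne hsome heq
  have hne' : ((c₁.2, c₁.1) : Fin n × Fin n) ≠ (c₂.2, c₂.1) := by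
    intro h
    apply hne
    rw [Prod.ext_iff] at h ⊢
    exact ⟨h.2, h.1⟩
  have := hM _ _ hne' hsome heq
  exact ⟨this.2, this.1⟩

/-- transpose preserves symbol counts -/
lemma transpose_count (n : ℕ) (M : Fin n × Fin n → Option (Fin n)) (k : Fin n) :
    #(univ.filter fun c : Fin n × Fin n => M (c.2, c.1) = some k) =
      #(univ.filter fun c : Fin n × Fin n => M c = some k) := by
  classical
  apply card_bij (fun c _ => (c.2, c.1))
  · intro c hc
    simp only [mem_filter, mem_univ, true_and] at hc ⊢
    exact hc
  · intro c₁ h₁ c₂ h₂ he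
    rw [Prod.ext_iff] at he
    exact Prod.ext he.2 he.1
  · intro c hc
    refine ⟨(c.2, c.1), ?_, rfl⟩
    simp only [mem_filter, mem_univ, true_and] at hc ⊢
    simpa using hc

theorem stmt18 (n r s : ℕ) (hr0 : 0 < r) (hrn : r < n) (hs0 : 0 < s) (hsn : s < n)
    (L : Fin n × Fin n → Option (Fin n)) (hL : IsPartialLatin n L)
    (hfill : ∀ c : Fin n × Fin n, (L c).isSome ↔ (c.1 : ℕ) < r ∧ (c.2 : ℕ) < s) :
    (∃ L' : Fin n × Fin n → Fin n, IsLatin n L' ∧ Completes n L' L) ↔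
      ∀ k : Fin n, r + s - n ≤ (Finset.univ.filter fun c => L c = some k).card := by
  classical
  constructor
  · -- forward: completion exists → counting condition
    rintro ⟨L', ⟨hrow, hcol⟩, hcomp⟩ k
    suffices h : r + s ≤ #(univ.filter fun c => L c = some k) + n by omega
    -- for each row, the position of k in that row
    have hsurj : ∀ i : Fin n, ∃ j, L' (i, j) = k := fun i =>
      Finite.surjective_of_injective (hrow i) k
    choose p hp using hsurj
    have hpinj : Function.Injective p := by
      intro i₁ i₂ he
      apply hcol (p i₁)
      show L' (i₁, p i₁) = L' (i₂, p i₁)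
      rw [hp i₁, he, hp i₂]
    set R : Finset (Fin n) := univ.filter (fun i : Fin n => (i : ℕ) < r) with hR
    set A : Finset (Fin n) := R.filter (fun i => (p i : ℕ) < s) with hA
    set B : Finset (Fin n) := R.filter (fun i => ¬ (p i : ℕ) < s) with hB
    have hAB : #A + #B = r := by
      rw [hA, hB, card_filter_add_card_filter_not, hR, card_seg n r (le_of_lt hrn)]
    have hBle : #B ≤ n - s := by
      have : #B ≤ #(univ.filter (fun j : Fin n => ¬ (j : ℕ) < s)) := by
        apply card_le_card_of_injOn p
        · intro i hi
          exact mem_filter.mpr ⟨mem_univ _, (mem_filter.mp hi).2⟩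
        · exact fun a _ b _ h => hpinj h
      refine le_trans this (le_of_eq ?_)
      have := card_filter_add_card_filter_not (s := (univ : Finset (Fin n)))
        (p := fun j : Fin n => (j : ℕ) < s)
      rw [card_seg n s (le_of_lt hsn), card_univ, Fintype.card_fin] at this
      omega
    have hAle : #A ≤ #(univ.filter fun c => L c = some k) := by
      apply card_le_card_of_injOn (fun i => (i, p i))
      · intro i hi
        obtain ⟨hiR, hips⟩ := mem_filter.mp hi
        have hir : (i : ℕ) < r := (mem_filter.mp hiR).2
        have hsome : (L (i, p i)).isSome := (hfill (i, p i)).mpr ⟨hir, hips⟩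
        obtain ⟨m, hm⟩ := Option.isSome_iff_exists.mp hsome
        have : L' (i, p i) = m := hcomp _ _ hm
        rw [hp i] at this
        rw [mem_coe, mem_filter]
        exact ⟨mem_univ _, by rw [hm, this]⟩
      · intro a _ b _ h
        exact congrArg Prod.fst h
    omega
  · -- backward: counting condition → completion exists
    intro hcount
    have hinv : ∀ k : Fin n, r + s ≤ #(univ.filter fun c => L c = some k) + n := by
      intro k
      have := hcount k
      omega
    obtain ⟨M₁, hM₁, hfill₁, hext₁, hinv₁⟩ :=
      extendCols n r (le_of_lt hrn) (n - s) s (by omega) L hL hfill hinv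
    -- transpose
    set M₂ : Fin n × Fin n → Option (Fin n) := fun c => M₁ (c.2, c.1) with hM₂
    have hM₂latin : IsPartialLatin n M₂ := transpose_latin n M₁ hM₁
    have hfill₂ : ∀ c : Fin n × Fin n, (M₂ c).isSome ↔ (c.1 : ℕ) < n ∧ (c.2 : ℕ) < r := by
      intro c
      rw [hM₂]
      have := hfill₁ (c.2, c.1)
      simp only at this ⊢
      rw [this]
      constructor <;> (rintro ⟨h1, h2⟩; exact ⟨h2, h1⟩)
    have hinv₂ : ∀ k : Fin n, n + r ≤ #(univ.filter fun c => M₂ c = some k) + n := by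
      intro k
      have := hinv₁ k
      rw [hM₂]
      rw [transpose_count n M₁ k]
      omega
    obtain ⟨M₃, hM₃, hfill₃, hext₃, _⟩ :=
      extendCols n n le_rfl (n - r) r (by omega) M₂ hM₂latin hfill₂ hinv₂
    -- M₃ is totally filled; transpose back and extract
    have hallsome : ∀ c : Fin n × Fin n, (M₃ c).isSome := by
      intro c
      rw [hfill₃]
      exact ⟨c.1.2, c.2.2⟩
    set L' : Fin n × Fin n → Fin n := fun c => (M₃ (c.2, c.1)).get (hallsome (c.2, c.1))
      with hL'
    have hL'some : ∀ c : Fin n × Fin n, M₃ (c.2, c.1) = some (L' c) := by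
      intro c
      rw [hL']
      simp [Option.some_get]
    refine ⟨L', ⟨?_, ?_⟩, ?_⟩
    · -- rows injective
      intro i j₁ j₂ he
      simp only at he
      have h1 := hL'some (i, j₁)
      have h2 := hL'some (i, j₂)
      by_contra hne
      have hcne : ((j₁, i) : Fin n × Fin n) ≠ (j₂, i) := by
        simp [Prod.ext_iff]; intro h; exact hne h
      have := hM₃ (j₁, i) (j₂, i) hcne (hallsome _) (by rw [h1, h2, he])
      exact this.2 rfl
    · -- columns injective
      intro j i₁ i₂ he
      simp only at he
      have h1 := hL'some (i₁, j)
      have h2 := hL'some (i₂, j)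
      by_contra hne
      have hcne : ((j, i₁) : Fin n × Fin n) ≠ (j, i₂) := by
        simp [Prod.ext_iff]; intro h; exact hne h
      have := hM₃ (j, i₁) (j, i₂) hcne (hallsome _) (by rw [h1, h2, he])
      exact this.1 rfl
    · -- completes
      intro c k hc
      have h1 : M₁ c = some k := hext₁ c k hc
      have h2 : M₂ (c.2, c.1) = some k := by simpa [hM₂] using h1
      have h3 : M₃ (c.2, c.1) = some k := hext₃ (c.2, c.1) k h2
      have := hL'some c
      rw [h3] at this
      exact (Option.some_injective _ this).symm
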